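/- For every natural number n, there is an online matroid morphism from the class of binary matroids with at most n elements into the complete binary matroid of rank n. That is, one can choose for every m ≤ n and every binary matroid M on Fin m (with ground set all of Fin m) a rank-preserving map f_M : Fin m → (Fin n → ZMod 2) (for every S ⊆ Fin m, the dimension of the 𝔽₂-linear span of f_M(S) equals rank_M(S)), such that whenever M' is the k-prefix of M, f_{M'} agrees with f_M on the first k elements. -/

import Mathlib

open Set

/-- The rank of a set in a matroid: the supremum of the cardinalities of its
independent subsets. -/
noncomputable def mRank {α : Type*} (M : Matroid α) (S : Set α) : ℕ∞ :=
  ⨆ I ∈ {I : Set α | M.Indep I ∧ I ⊆ S}, I.encard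

/-- The rank of a set of vectors: the dimension of its linear span. -/
noncomputable def spanRank (K : Type*) [Field K] {W : Type*} [AddCommGroup W] [Module K W]
    (S : Set W) : ℕ :=
  Module.finrank K (Submodule.span K S)

/-- A matroid is representable over a field `K` if independence coincides with
`K`-linear independence of an assignment of vectors to the elements. -/
def RepOver (K : Type*) [Field K] {α : Type*} (M : Matroid α) : Prop :=
  ∃ (ι : Type) (f : α → ι → K), ∀ I : Set α,
    M.Indep I ↔ I ⊆ M.E ∧ LinearIndependent K (fun x : I => f (x : α))

/-- The `k`-prefix of an ordered matroid on `Fin m`: its restriction to the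
first `k` elements, viewed as a matroid on `Fin k`. -/
def prefixMatroid {k m : ℕ} (h : k ≤ m) (M : Matroid (Fin m)) : Matroid (Fin k) :=
  M.comap (Fin.castLE h)

open Submodule

theorem linearIndependent_insert' {ι K V : Type*} [DivisionRing K] [AddCommGroup V] [Module K V]
    {s : Set ι} {a : ι} {f : ι → V} (has : a ∉ s) :
    LinearIndependent K (fun x : ↥(insert a s) => f x) ↔
      LinearIndependent K (fun x : s => f x) ∧ f a ∉ Submodule.span K (f '' s) :=
  linearIndepOn_insert has

namespace OMM
open scoped Classical

variable {m : ℕ}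

noncomputable def greedy (M : Matroid (Fin m)) : ℕ → Finset (Fin m)
  | 0 => ∅
  | t + 1 =>
    if h : t < m then
      if M.Indep (insert ⟨t, h⟩ ↑(greedy M t)) then insert ⟨t, h⟩ (greedy M t)
      else greedy M t
    else greedy M t

lemma greedy_lt {M : Matroid (Fin m)} : ∀ t, ∀ x ∈ greedy M t, (x : ℕ) < t := by
  intro t
  induction t with
  | zero => simp [greedy]
  | succ t ih =>
    intro x hx
    rw [greedy] at hx
    split_ifs at hx with h1 h2
    · rcases Finset.mem_insert.1 hx with rfl | hx
      · simp
      · exact Nat.lt_succ_of_lt (ih x hx)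
    · exact Nat.lt_succ_of_lt (ih x hx)
    · exact Nat.lt_succ_of_lt (ih x hx)

lemma greedy_indep {M : Matroid (Fin m)} : ∀ t, M.Indep ↑(greedy M t) := by
  intro t
  induction t with
  | zero => simpa [greedy] using M.empty_indep
  | succ t ih =>
    rw [greedy]
    split_ifs with h1 h2
    · simpa using h2
    · exact ih
    · exact ih

lemma greedy_filter {M : Matroid (Fin m)} {t s : ℕ} (hts : t ≤ s) :
    greedy M t = (greedy M s).filter (fun x : Fin m => x.val < t) := by
  induction s with
  | zero =>
    obtain rfl : t = 0 := Nat.le_zero.1 hts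
    simp [greedy]
  | succ s ih =>
    rcases Nat.lt_or_ge t (s+1) with h | h
    · have hts' : t ≤ s := Nat.lt_succ_iff.1 h
      rw [ih hts']
      conv_rhs => rw [greedy]
      split_ifs with h1 h2
      · rw [Finset.filter_insert, if_neg (by simp; omega)]
      · rfl
      · rfl
    · obtain rfl : t = s + 1 := le_antisymm hts h
      rw [Finset.filter_true_of_mem (fun x hx => greedy_lt _ x hx)]

/-- The greedy basis of an ordered matroid on `Fin m`. -/
noncomputable def gB (M : Matroid (Fin m)) : Finset (Fin m) := greedy M m

section rep

variable {ι : Type} {M : Matroid (Fin m)} {g : Fin m → ι → ZMod 2}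
  (hE : M.E = univ)
  (hg : ∀ I : Set (Fin m), M.Indep I ↔ I ⊆ M.E ∧
    LinearIndependent (ZMod 2) (fun x : I => g (x : Fin m)))

include hE hg

lemma indep_iff_li {I : Set (Fin m)} :
    M.Indep I ↔ LinearIndependent (ZMod 2) (fun x : I => g (x : Fin m)) := by
  rw [hg, hE]; simp

lemma greedy_spans (t : ℕ) :
    span (ZMod 2) (g '' ↑(greedy M t)) = span (ZMod 2) (g '' {y : Fin m | y.val < t}) := by
  induction t with
  | zero => simp [greedy]
  | succ t ih =>
    have hset : {y : Fin m | y.val < t + 1} =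
        {y : Fin m | y.val < t} ∪ {y : Fin m | y.val = t} := by
      ext y; simp [Nat.lt_succ_iff_lt_or_eq]; omega
    rcases Nat.lt_or_ge t m with h1 | h1
    · set x : Fin m := ⟨t, h1⟩
      have hxnot : x ∉ (↑(greedy M t) : Set (Fin m)) := by
        intro hx
        exact absurd (greedy_lt t x hx) (by simp [x])
      have hsing : {y : Fin m | y.val = t} = {x} := by
        ext y; simp [x, Fin.ext_iff]
      have hspan2 : span (ZMod 2) (g '' {y : Fin m | y.val < t + 1}) =
          span (ZMod 2) (insert (g x) (g '' {y : Fin m | y.val < t})) := by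
        rw [hset, image_union, hsing, image_singleton, union_singleton]
      rw [greedy]
      rw [dif_pos h1]
      split_ifs with h2
      · rw [hspan2, Finset.coe_insert, image_insert_eq, span_insert, span_insert, ih]
      · -- g x ∈ span of greedy M t
        have hli := (indep_iff_li hE hg).1 (greedy_indep t)
        have hnot : ¬ LinearIndependent (ZMod 2)
            (fun y : ↥(insert x (↑(greedy M t) : Set (Fin m))) => g (y : Fin m)) := by
          intro hcon
          exact h2 ((indep_iff_li hE hg).2 (by simpa using hcon))
        rw [linearIndependent_insert' hxnot] at hnot
        have hmem : g x ∈ span (ZMod 2) (g '' ↑(greedy M t)) := by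
          by_contra hmem
          exact hnot ⟨hli, hmem⟩
        rw [ih] at hmem
        rw [hspan2, span_insert, ih,
          sup_eq_right.2 ((span_singleton_le_iff_mem _ _).2 hmem)]
    · rw [greedy, dif_neg (by omega)]
      have hset2 : {y : Fin m | y.val < t + 1} = {y : Fin m | y.val < t} := by
        ext y; have := y.isLt; simp only [mem_setOf_eq]; omega
      rw [hset2, ih]

omit hE hg in
lemma gB_indep : M.Indep ↑(gB M) := greedy_indep m

lemma span_gB : span (ZMod 2) (g '' ↑(gB M)) = span (ZMod 2) (range g) := by
  have h1 := greedy_spans hE hg m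
  have huniv : {y : Fin m | y.val < m} = univ := by
    ext y; simpa using y.isLt
  rw [gB, h1, huniv, image_univ]

/-- `g` restricted to the greedy basis, as a family of vectors in the span of `g`. -/
noncomputable def ghat (g : Fin m → ι → ZMod 2) (x : Fin m) :
    span (ZMod 2) (range g) := ⟨g x, subset_span (mem_range_self x)⟩

lemma li_gB : LinearIndependent (ZMod 2)
    (fun b : ↥(↑(gB M) : Set (Fin m)) => ghat g (b : Fin m)) := by
  have h1 := (indep_iff_li hE hg).1 (gB_indep (M := M))
  exact LinearIndependent.of_comp (span (ZMod 2) (range g)).subtype h1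

lemma sp_gB : ⊤ ≤ span (ZMod 2)
    (range (fun b : ↥(↑(gB M) : Set (Fin m)) => ghat g (b : Fin m))) := by
  have hinj : Function.Injective (span (ZMod 2) (range g)).subtype :=
    Submodule.injective_subtype _
  have hmap := Submodule.map_injective_of_injective hinj
  apply le_of_eq
  apply hmap
  rw [Submodule.map_span, Submodule.map_subtype_top]
  have himg : (span (ZMod 2) (range g)).subtype ''
      (range fun b : ↥(↑(gB M) : Set (Fin m)) => ghat g (b : Fin m))
      = g '' ↑(gB M) := by
    ext v
    constructor
    · rintro ⟨w, ⟨b, rfl⟩, rfl⟩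
      exact ⟨b, b.2, rfl⟩
    · rintro ⟨a, ha, rfl⟩
      exact ⟨ghat g a, ⟨⟨a, ha⟩, rfl⟩, rfl⟩
  rw [himg, span_gB hE hg]

/-- The greedy basis as a basis of the span of the representation vectors. -/
noncomputable def eB : Module.Basis ↥(↑(gB M) : Set (Fin m)) (ZMod 2)
    (span (ZMod 2) (range g)) := Module.Basis.mk (li_gB hE hg) (sp_gB hE hg)

omit hE hg in
lemma mem_map_subtype_iff {K V : Type*} [Field K] [AddCommGroup V] [Module K V]
    {W : Submodule K V} {p : Submodule K ↥W} (x : ↥W) :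
    (x : V) ∈ p.map W.subtype ↔ x ∈ p := by
  constructor
  · rintro ⟨y, hy, he⟩
    rwa [show y = x from Subtype.ext he] at hy
  · intro h
    exact ⟨x, h, rfl⟩

lemma mem_span_sub_iff {A : Set (Fin m)} (hA : A ⊆ ↑(gB M)) (x : Fin m) :
    g x ∈ span (ZMod 2) (g '' A) ↔
    ∀ b : ↥(↑(gB M) : Set (Fin m)), (b : Fin m) ∉ A →
      (eB hE hg).repr (ghat g x) b = 0 := by
  set W := span (ZMod 2) (range g)
  set A' : Set ↥(↑(gB M) : Set (Fin m)) := {b | (b : Fin m) ∈ A}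
  have himg : W.subtype '' ((eB hE hg) '' A') = g '' A := by
    ext v
    constructor
    · rintro ⟨w, ⟨b, hb, rfl⟩, rfl⟩
      exact ⟨b, hb, by rw [eB, Module.Basis.mk_apply]; rfl⟩
    · rintro ⟨a, ha, rfl⟩
      exact ⟨ghat g a, ⟨⟨a, hA ha⟩, ha, by rw [eB, Module.Basis.mk_apply]⟩, rfl⟩
  have hgx : g x = ((ghat g x : ↥W) : ι → ZMod 2) := rfl
  rw [← himg, ← Submodule.map_span, hgx, mem_map_subtype_iff, Module.Basis.mem_span_image]
  constructor
  · intro h b hb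
    by_contra hne
    exact hb (h (Finsupp.mem_support_iff.2 hne))
  · intro h b hb
    by_contra hbA
    exact (Finsupp.mem_support_iff.1 hb) (h b hbA)

end rep

/-- The position of `b` in the greedy basis. -/
noncomputable def idx (M : Matroid (Fin m)) (b : Fin m) : ℕ :=
  ((gB M).filter (fun y => y < b)).card

/-- `b`'s coefficient in the expansion of `x` over the greedy basis is nonzero. -/
def cond (M : Matroid (Fin m)) (x b : Fin m) : Prop :=
  x ∉ (↑(gB M) : Set (Fin m)) \ {b} ∧
    M.Indep (insert x ((↑(gB M) : Set (Fin m)) \ {b}))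

/-- The online morphism: `x` is mapped to its coordinate vector over the greedy basis. -/
noncomputable def omf (n : ℕ) {m : ℕ} (M : Matroid (Fin m)) (x : Fin m) :
    Fin n → ZMod 2 :=
  fun j => if ∃ b ∈ gB M, idx M b = (j : ℕ) ∧ cond M x b then 1 else 0

lemma greedy_mono {M : Matroid (Fin m)} {t s : ℕ} (hts : t ≤ s) :
    greedy M t ⊆ greedy M s := by
  rw [greedy_filter hts]; exact Finset.filter_subset _ _

lemma gB_card_le (M : Matroid (Fin m)) : (gB M).card ≤ m := by
  simpa using Finset.card_le_univ (gB M)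

lemma idx_lt_card {M : Matroid (Fin m)} {b : Fin m} (hb : b ∈ gB M) :
    idx M b < (gB M).card := by
  apply Finset.card_lt_card
  rw [Finset.ssubset_iff_of_subset (Finset.filter_subset _ _)]
  exact ⟨b, hb, by simp⟩

lemma idx_strictMono {M : Matroid (Fin m)} {a b : Fin m} (ha : a ∈ gB M)
    (hab : a < b) : idx M a < idx M b := by
  apply Finset.card_lt_card
  constructor
  · intro y hy
    simp only [Finset.mem_filter] at hy ⊢
    exact ⟨hy.1, lt_trans hy.2 hab⟩
  · intro hcon
    have := hcon (Finset.mem_filter.2 ⟨ha, hab⟩)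
    simp at this

lemma idx_injOn {M : Matroid (Fin m)} {a b : Fin m} (ha : a ∈ gB M)
    (hb : b ∈ gB M) (hab : idx M a = idx M b) : a = b := by
  rcases lt_trichotomy a b with h | h | h
  · exact absurd hab (Nat.ne_of_lt (idx_strictMono ha h))
  · exact h
  · exact absurd hab.symm (Nat.ne_of_lt (idx_strictMono hb h))

section rep2

variable {ι : Type} {M : Matroid (Fin m)} {g : Fin m → ι → ZMod 2}
  (hE : M.E = univ)
  (hg : ∀ I : Set (Fin m), M.Indep I ↔ I ⊆ M.E ∧
    LinearIndependent (ZMod 2) (fun x : I => g (x : Fin m)))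

include hE hg

lemma cond_iff_repr {b : Fin m} (hb : b ∈ gB M) (x : Fin m) :
    (eB hE hg).repr (ghat g x) ⟨b, hb⟩ = if cond M x b then 1 else 0 := by
  set B : Set (Fin m) := ↑(gB M) with hB
  by_cases hx : x ∈ B
  · by_cases hxb : x = b
    · subst hxb
      have hcond : cond M x x := by
        constructor
        · simp
        · rw [insert_diff_singleton, insert_eq_of_mem hx]
          exact gB_indep
      rw [if_pos hcond]
      have : ghat g x = (eB hE hg) ⟨x, hx⟩ := by rw [eB, Module.Basis.mk_apply]
      rw [this, Module.Basis.repr_self]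
      simp
    · have hcond : ¬ cond M x b := by
        intro hcon
        exact hcon.1 ⟨hx, hxb⟩
      rw [if_neg hcond]
      have : ghat g x = (eB hE hg) ⟨x, hx⟩ := by rw [eB, Module.Basis.mk_apply]
      rw [this, Module.Basis.repr_self]
      rw [Finsupp.single_apply, if_neg (by simpa [Subtype.ext_iff] using hxb)]
  · have hxd : x ∉ B \ {b} := fun h => hx h.1
    have hli : LinearIndependent (ZMod 2) (fun y : ↥(B \ {b}) => g (y : Fin m)) :=
      (indep_iff_li hE hg).1 (gB_indep.subset diff_subset)
    have hcond : cond M x b ↔ g x ∉ span (ZMod 2) (g '' (B \ {b})) := by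
      unfold cond
      rw [indep_iff_li hE hg, linearIndependent_insert' hxd]
      tauto
    have hspan := mem_span_sub_iff hE hg (diff_subset (s := B) (t := {b})) x
    have hspan2 : g x ∈ span (ZMod 2) (g '' (B \ {b})) ↔
        (eB hE hg).repr (ghat g x) ⟨b, hb⟩ = 0 := by
      rw [hspan]
      constructor
      · intro h
        exact h ⟨b, hb⟩ (by simp)
      · intro h b' hb'
        have : (b' : Fin m) = b := by
          by_contra hne
          exact hb' ⟨b'.2, hne⟩
        rwa [show b' = ⟨b, hb⟩ from Subtype.ext this]
    rcases eq_or_ne ((eB hE hg).repr (ghat g x) ⟨b, hb⟩) 0 with h0 | h0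
    · rw [h0, if_neg]
      intro hcon
      exact (hcond.1 hcon) (hspan2.2 h0)
    · have hall : ∀ a : ZMod 2, a ≠ 0 → a = 1 := by decide
      rw [if_pos, hall _ h0]
      exact hcond.2 (fun hmem => h0 (hspan2.1 hmem))

variable {n : ℕ} (hmn : m ≤ n)

/-- The standard-basis targets for the greedy basis elements. -/
noncomputable def uvec (hmn : m ≤ n) (M : Matroid (Fin m)) :
    ↥(↑(gB M) : Set (Fin m)) → Fin n → ZMod 2 :=
  fun b => Pi.single (⟨idx M (b : Fin m),
    lt_of_lt_of_le (lt_of_lt_of_le (idx_lt_card (by exact b.2)) (gB_card_le M)) hmn⟩ : Fin n) 1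

omit hE hg in
lemma uvec_li (M : Matroid (Fin m)) :
    LinearIndependent (ZMod 2) (uvec hmn M) := by
  have hb := (Pi.basisFun (ZMod 2) (Fin n)).linearIndependent
  have hinj : Function.Injective (fun b : ↥(↑(gB M) : Set (Fin m)) =>
      (⟨idx M (b : Fin m), lt_of_lt_of_le (lt_of_lt_of_le (idx_lt_card (by exact b.2))
        (gB_card_le M)) hmn⟩ : Fin n)) := by
    intro a b hab
    simp only [Fin.mk.injEq] at hab
    exact Subtype.ext (idx_injOn a.2 b.2 hab)
  have := hb.comp _ hinj
  convert this with b
  funext b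
  simp only [uvec, Function.comp_apply, Pi.basisFun_apply]

include hE hg

lemma omf_eq (x : Fin m) :
    omf n M x = (eB hE hg).constr ℕ (uvec hmn M) (ghat g x) := by
  funext j
  rw [Module.Basis.constr_apply_fintype]
  rw [Finset.sum_apply]
  by_cases hex : ∃ b0 : ↥(↑(gB M) : Set (Fin m)), idx M (b0 : Fin m) = (j : ℕ)
  · obtain ⟨b0, hb0⟩ := hex
    rw [Finset.sum_eq_single b0]
    · have heq : (eB hE hg).equivFun (ghat g x) b0 = (eB hE hg).repr (ghat g x) b0 := by
        rw [Module.Basis.equivFun_apply]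
      rw [heq]
      have hb0' : (⟨(b0 : Fin m), b0.2⟩ : ↥(↑(gB M) : Set (Fin m))) = b0 := rfl
      have hrepr := cond_iff_repr hE hg (Finset.mem_coe.1 b0.2) (x := x)
      rw [hb0'] at hrepr
      rw [hrepr]
      have hsingle : (uvec hmn M b0) j = 1 := by
        simp only [uvec]
        rw [Pi.single_apply, if_pos]
        exact (Fin.ext hb0).symm
      have homf : omf n M x j = if cond M x (b0 : Fin m) then 1 else 0 := by
        unfold omf
        congr 1
        simp only [eq_iff_iff]
        constructor
        · rintro ⟨b, hb, hbj, hcond⟩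
          have : b = (b0 : Fin m) := idx_injOn hb b0.2 (by rw [hbj, hb0])
          rwa [this] at hcond
        · intro hcond
          exact ⟨(b0 : Fin m), b0.2, hb0, hcond⟩
      rw [homf]
      split_ifs <;> simp [hsingle]
    · intro b _ hbne
      have : (uvec hmn M b) j = 0 := by
        simp only [uvec]
        rw [Pi.single_apply, if_neg]
        intro hcon
        have : idx M (b : Fin m) = (j : ℕ) := by rw [hcon]
        exact hbne (Subtype.ext (idx_injOn b.2 b0.2 (by rw [this, hb0])))
      simp [this]
    · intro hcon
      exact absurd (Finset.mem_univ b0) hcon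
  · have homf : omf n M x j = 0 := by
      unfold omf
      rw [if_neg]
      rintro ⟨b, hb, hbj, -⟩
      exact hex ⟨⟨b, hb⟩, hbj⟩
    rw [homf]
    symm
    apply Finset.sum_eq_zero
    intro b _
    have : (uvec hmn M b) j = 0 := by
      simp only [uvec]
      rw [Pi.single_apply, if_neg]
      intro hcon
      exact hex ⟨b, by rw [hcon]⟩
    simp [this]

lemma constr_inj : Function.Injective ((eB hE hg).constr ℕ (uvec hmn M)) := by
  rw [← LinearMap.ker_eq_bot]
  rw [Submodule.eq_bot_iff]
  intro v hv
  rw [LinearMap.mem_ker, Module.Basis.constr_apply_fintype] at hv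
  have hli := Fintype.linearIndependent_iff.1 (uvec_li hmn M)
  have hz := hli _ hv
  apply (eB hE hg).repr.injective
  ext b
  have := hz b
  rw [Module.Basis.equivFun_apply] at this
  rw [map_zero]
  exact this

omit hE hg in
lemma finrank_span_map {K V₁ V₂ : Type*} [Field K] [AddCommGroup V₁] [Module K V₁]
    [AddCommGroup V₂] [Module K V₂] (φ : V₁ →ₗ[K] V₂) (hφ : Function.Injective φ)
    (A : Set V₁) :
    Module.finrank K (Submodule.span K (φ '' A)) = Module.finrank K (Submodule.span K A) := by
  rw [← Submodule.map_span]
  exact (Submodule.equivMapOfInjective φ hφ _).symm.finrank_eq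

lemma mRank_eq (S : Set (Fin m)) :
    mRank M S = (Module.finrank (ZMod 2) (span (ZMod 2) (g '' S)) : ℕ∞) := by
  haveI : Module.Finite (ZMod 2) (span (ZMod 2) (g '' S)) :=
    FiniteDimensional.span_of_finite _ (toFinite _)
  apply le_antisymm
  · apply iSup₂_le
    intro I hI
    obtain ⟨hind, hIS⟩ := hI
    have hli := (indep_iff_li hE hg).1 hind
    have hinj : InjOn g I := fun a ha b hb hab =>
      Subtype.ext_iff.1 (hli.injective (a₁ := ⟨a, ha⟩) (a₂ := ⟨b, hb⟩) hab)
    haveI : Fintype ↥(g '' I) := (toFinite _).fintype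
    have hcard : Module.finrank (ZMod 2) (span (ZMod 2) (g '' I)) = (g '' I).toFinset.card :=
      finrank_span_set_eq_card (LinearIndepOn.id_image hli)
    have hle : Module.finrank (ZMod 2) (span (ZMod 2) (g '' I)) ≤
        Module.finrank (ZMod 2) (span (ZMod 2) (g '' S)) :=
      Submodule.finrank_mono (span_mono (image_mono hIS))
    have hI_encard : I.encard = ((g '' I).toFinset.card : ℕ∞) := by
      rw [← hinj.encard_image]
      rw [Set.encard_eq_coe_toFinset_card]
    rw [hI_encard]
    exact_mod_cast le_trans (le_of_eq (congrArg _ hcard.symm)) (Nat.cast_le.2 hle)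
  · obtain ⟨t, hts, hspan, hli⟩ := exists_linearIndependent (ZMod 2) (g '' S)
    have htfin : t.Finite := (toFinite (g '' S)).subset hts
    haveI : Fintype ↥t := htfin.fintype
    have hchoice : ∀ v : ↥t, ∃ x, x ∈ S ∧ g x = (v : ι → ZMod 2) := by
      intro v
      obtain ⟨x, hx, hgx⟩ := hts v.2
      exact ⟨x, hx, hgx⟩
    choose p hp1 hp2 using hchoice
    set I : Set (Fin m) := range p with hIdef
    have hIS : I ⊆ S := by rintro x ⟨v, rfl⟩; exact hp1 v
    have hbij : Function.Bijective (fun v : ↥t => (⟨p v, ⟨v, rfl⟩⟩ : ↥I)) := by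
      constructor
      · intro a b hab
        have : p a = p b := Subtype.ext_iff.1 hab
        have : (a : ι → ZMod 2) = b := by rw [← hp2 a, ← hp2 b, this]
        exact Subtype.ext this
      · rintro ⟨x, v, rfl⟩
        exact ⟨v, rfl⟩
    have hli' : LinearIndependent (ZMod 2) (fun x : ↥I => g (x : Fin m)) := by
      rw [← linearIndependent_equiv (Equiv.ofBijective _ hbij)]
      have : (fun x : ↥I => g (x : Fin m)) ∘ (Equiv.ofBijective _ hbij) =
          (fun v : ↥t => (v : ι → ZMod 2)) := by
        funext v
        exact hp2 v
      rw [this]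
      exact hli
    have hind : M.Indep I := (indep_iff_li hE hg).2 hli'
    have hgI : g '' I = t := by
      apply Subset.antisymm
      · rintro v ⟨x, ⟨w, rfl⟩, rfl⟩
        rw [hp2 w]; exact w.2
      · intro v hv
        exact ⟨p ⟨v, hv⟩, ⟨⟨v, hv⟩, rfl⟩, hp2 ⟨v, hv⟩⟩
    have hinjI : InjOn g I := by
      rintro a ⟨v, rfl⟩ b ⟨w, rfl⟩ hab
      rw [hp2 v, hp2 w] at hab
      rw [show v = w from Subtype.ext hab]
    have hencard : I.encard = (t.toFinset.card : ℕ∞) := by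
      rw [← hinjI.encard_image, hgI, Set.encard_eq_coe_toFinset_card]
    have hrank : Module.finrank (ZMod 2) (span (ZMod 2) (g '' S)) = t.toFinset.card := by
      rw [← hspan]
      exact finrank_span_set_eq_card hli
    calc (Module.finrank (ZMod 2) (span (ZMod 2) (g '' S)) : ℕ∞)
        = I.encard := by rw [hrank, hencard]
      _ ≤ mRank M S := le_iSup₂ (f := fun I _ => I.encard) I ⟨hind, hIS⟩

include hmn in
lemma rank_pres (S : Set (Fin m)) :
    (spanRank (ZMod 2) (omf n M '' S) : ℕ∞) = mRank M S := by
  rw [mRank_eq hE hg S]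
  norm_cast
  unfold _root_.spanRank
  have h1 : omf n M '' S = ((eB hE hg).constr ℕ (uvec hmn M)) '' ((ghat g) '' S) := by
    rw [← image_comp]
    exact image_congr (fun x _ => omf_eq hE hg hmn x)
  rw [h1, finrank_span_map _ (constr_inj hE hg hmn)]
  have h4 : (span (ZMod 2) (range g)).subtype '' ((ghat g) '' S) = g '' S := by
    ext v
    constructor
    · rintro ⟨w, ⟨x, hx, rfl⟩, rfl⟩
      exact ⟨x, hx, rfl⟩
    · rintro ⟨x, hx, rfl⟩
      exact ⟨ghat g x, ⟨x, hx, rfl⟩, rfl⟩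
  have h3 := finrank_span_map ((span (ZMod 2) (range g)).subtype)
    (Submodule.injective_subtype _) ((ghat g) '' S)
  rw [h4] at h3
  exact h3.symm

end rep2

section prefixsec

variable {k : ℕ} (hkm : k ≤ m) {M : Matroid (Fin m)}

lemma prefix_indep {I : Set (Fin k)} :
    (prefixMatroid hkm M).Indep I ↔ M.Indep (Fin.castLE hkm '' I) := by
  rw [prefixMatroid, Matroid.comap_indep_iff]
  exact and_iff_left ((Fin.castLE_injective hkm).injOn)

lemma greedy_prefix : ∀ t, t ≤ k →
    Fin.castLE hkm '' ↑(greedy (prefixMatroid hkm M) t) = ↑(greedy M t) := by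
  intro t
  induction t with
  | zero => intro _; simp [greedy]
  | succ t ih =>
    intro ht
    have htk : t < k := ht
    have htm : t < m := lt_of_lt_of_le htk hkm
    have ihe := ih (le_of_lt htk)
    have hcast : Fin.castLE hkm ⟨t, htk⟩ = ⟨t, htm⟩ := rfl
    have hind : (prefixMatroid hkm M).Indep
        (insert ⟨t, htk⟩ ↑(greedy (prefixMatroid hkm M) t)) ↔
        M.Indep (insert ⟨t, htm⟩ ↑(greedy M t)) := by
      rw [prefix_indep, image_insert_eq, hcast, ihe]
    rw [greedy, greedy, dif_pos htk, dif_pos htm]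
    split_ifs with h1 h2 h2
    · rw [Finset.coe_insert, Finset.coe_insert, image_insert_eq, hcast, ihe]
    · exact absurd (hind.1 h1) h2
    · exact absurd (hind.2 h2) h1
    · exact ihe

lemma gB_prefix : Fin.castLE hkm '' ↑(gB (prefixMatroid hkm M)) = ↑(greedy M k) :=
  greedy_prefix hkm k le_rfl

lemma mem_gB_prefix_iff {x : Fin k} :
    x ∈ gB (prefixMatroid hkm M) ↔ Fin.castLE hkm x ∈ gB M := by
  constructor
  · intro hx
    have : (Fin.castLE hkm x : Fin m) ∈ (↑(greedy M k) : Set (Fin m)) := by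
      rw [← gB_prefix hkm]
      exact ⟨x, hx, rfl⟩
    have h2 : greedy M k ⊆ gB M := by
      rw [gB]; exact greedy_mono hkm
    exact h2 this
  · intro hx
    have hxk : (Fin.castLE hkm x : Fin m) ∈ greedy M k := by
      rw [greedy_filter (M := M) hkm]
      exact Finset.mem_filter.2 ⟨hx, x.isLt⟩
    have : (Fin.castLE hkm x : Fin m) ∈ Fin.castLE hkm '' ↑(gB (prefixMatroid hkm M)) := by
      rw [gB_prefix hkm]
      exact hxk
    obtain ⟨y, hy, hxy⟩ := this
    rwa [← Fin.castLE_injective hkm hxy]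

lemma gB_prefix_finset :
    (gB (prefixMatroid hkm M)).image (Fin.castLE hkm) = greedy M k := by
  apply Finset.coe_injective
  rw [Finset.coe_image]
  exact gB_prefix hkm

lemma idx_prefix {b' : Fin k} (hb' : b' ∈ gB (prefixMatroid hkm M)) :
    idx (prefixMatroid hkm M) b' = idx M (Fin.castLE hkm b') := by
  unfold idx
  have h1 : (gB M).filter (fun y => y < Fin.castLE hkm b')
      = (greedy M k).filter (fun y => y < Fin.castLE hkm b') := by
    ext y
    simp only [Finset.mem_filter]
    constructor
    · rintro ⟨hy, hlt⟩
      refine ⟨?_, hlt⟩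
      rw [greedy_filter (M := M) hkm]
      refine Finset.mem_filter.2 ⟨hy, ?_⟩
      have h2 : (y : ℕ) < (b' : ℕ) := hlt
      have := b'.isLt
      omega
    · rintro ⟨hy, hlt⟩
      exact ⟨greedy_mono hkm hy, hlt⟩
  rw [h1, ← gB_prefix_finset hkm, Finset.filter_image,
    Finset.card_image_of_injective _ (Fin.castLE_injective hkm)]
  congr 1

lemma cond_self {M : Matroid (Fin m)} {b : Fin m} (hb : b ∈ gB M) : cond M b b := by
  constructor
  · simp
  · rw [insert_diff_singleton, insert_eq_of_mem (Finset.mem_coe.2 hb)]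
    exact gB_indep

end prefixsec

section prefixrep

variable {ι : Type} {k : ℕ} (hkm : k ≤ m) {M : Matroid (Fin m)} {g : Fin m → ι → ZMod 2}
  (hE : M.E = univ)
  (hg : ∀ I : Set (Fin m), M.Indep I ↔ I ⊆ M.E ∧
    LinearIndependent (ZMod 2) (fun x : I => g (x : Fin m)))

include hE hg

omit hg in
lemma prefix_ground : (prefixMatroid hkm M).E = univ := by
  simp [prefixMatroid, hE]

lemma span_cx (x : Fin k) :
    g (Fin.castLE hkm x) ∈ span (ZMod 2)
      (g '' (Fin.castLE hkm '' ↑(gB (prefixMatroid hkm M)))) := by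
  rw [gB_prefix hkm, greedy_spans hE hg k]
  exact subset_span ⟨Fin.castLE hkm x, x.isLt, rfl⟩

lemma cond_false_of_ge {b : Fin m} (hb : b ∈ gB M) (hbk : k ≤ (b : ℕ)) (x : Fin k) :
    ¬ cond M (Fin.castLE hkm x) b := by
  intro hcond
  have hxb : Fin.castLE hkm x ≠ b := by
    intro h
    have : (x : ℕ) = (b : ℕ) := congrArg Fin.val h
    have := x.isLt
    omega
  by_cases hcx : Fin.castLE hkm x ∈ (↑(gB M) : Set (Fin m))
  · exact hcond.1 ⟨hcx, hxb⟩
  · have hxd : Fin.castLE hkm x ∉ (↑(gB M) : Set (Fin m)) \ {b} := fun h => hcx h.1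
    have hli := (indep_iff_li hE hg).1 hcond.2
    rw [linearIndependent_insert' hxd] at hli
    apply hli.2
    have hsub : (Fin.castLE hkm '' ↑(gB (prefixMatroid hkm M))) ⊆
        (↑(gB M) : Set (Fin m)) \ {b} := by
      rw [gB_prefix hkm]
      intro y hy
      refine ⟨Finset.mem_coe.2 (greedy_mono hkm (Finset.mem_coe.1 hy)), ?_⟩
      intro hyb
      have h1 : (y : ℕ) < k := greedy_lt k y (Finset.mem_coe.1 hy)
      rw [hyb] at h1
      omega
    exact span_mono (image_mono hsub) (span_cx hkm hE hg x)

lemma cond_prefix_iff {b' : Fin k} (hb' : b' ∈ gB (prefixMatroid hkm M)) (x : Fin k) :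
    cond (prefixMatroid hkm M) x b' ↔
      cond M (Fin.castLE hkm x) (Fin.castLE hkm b') := by
  have hb : Fin.castLE hkm b' ∈ gB M := (mem_gB_prefix_iff hkm).1 hb'
  by_cases hxb : x = b'
  · subst hxb
    exact iff_of_true (cond_self hb') (cond_self hb)
  · have hcxb : Fin.castLE hkm x ≠ Fin.castLE hkm b' :=
      fun h => hxb (Fin.castLE_injective hkm h)
    by_cases hxB : x ∈ gB (prefixMatroid hkm M)
    · refine iff_of_false (fun hcon => hcon.1 ⟨Finset.mem_coe.2 hxB, hxb⟩)
        (fun hcon => hcon.1 ⟨Finset.mem_coe.2 ((mem_gB_prefix_iff hkm).1 hxB), hcxb⟩)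
    · have hcxB : Fin.castLE hkm x ∉ (↑(gB M) : Set (Fin m)) := by
        intro h
        exact hxB ((mem_gB_prefix_iff hkm).2 (Finset.mem_coe.1 h))
      have hxd' : x ∉ (↑(gB (prefixMatroid hkm M)) : Set (Fin k)) \ {b'} :=
        fun h => hxB (Finset.mem_coe.1 h.1)
      have hxd : Fin.castLE hkm x ∉ (↑(gB M) : Set (Fin m)) \ {Fin.castLE hkm b'} :=
        fun h => hcxB h.1
      have himg : Fin.castLE hkm '' ((↑(gB (prefixMatroid hkm M)) : Set (Fin k)) \ {b'})
          = (Fin.castLE hkm '' ↑(gB (prefixMatroid hkm M))) \ {Fin.castLE hkm b'} := by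
        rw [image_diff (Fin.castLE_injective hkm), image_singleton]
      have hsubB : Fin.castLE hkm '' ↑(gB (prefixMatroid hkm M)) ⊆
          (↑(gB M) : Set (Fin m)) := by
        rw [gB_prefix hkm]
        intro y hy
        exact Finset.mem_coe.2 (greedy_mono hkm (Finset.mem_coe.1 hy))
      have hxdimg : Fin.castLE hkm x ∉
          (Fin.castLE hkm '' ↑(gB (prefixMatroid hkm M))) \ {Fin.castLE hkm b'} :=
        fun h => hcxB (hsubB h.1)
      have lhs_iff : cond (prefixMatroid hkm M) x b' ↔
          g (Fin.castLE hkm x) ∉ span (ZMod 2)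
            (g '' ((Fin.castLE hkm '' ↑(gB (prefixMatroid hkm M)))
              \ {Fin.castLE hkm b'})) := by
        unfold cond
        rw [and_iff_right hxd']
        rw [prefix_indep hkm, image_insert_eq, himg, indep_iff_li hE hg,
          linearIndependent_insert' hxdimg]
        have hliA3 : LinearIndependent (ZMod 2)
            (fun y : ↥((Fin.castLE hkm '' ↑(gB (prefixMatroid hkm M)))
              \ {Fin.castLE hkm b'}) => g (y : Fin m)) :=
          (indep_iff_li hE hg).1 (gB_indep.subset (diff_subset.trans hsubB))
        rw [and_iff_right hliA3]
      have rhs_iff : cond M (Fin.castLE hkm x) (Fin.castLE hkm b') ↔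
          g (Fin.castLE hkm x) ∉ span (ZMod 2)
            (g '' ((↑(gB M) : Set (Fin m)) \ {Fin.castLE hkm b'})) := by
        unfold cond
        rw [and_iff_right hxd]
        rw [indep_iff_li hE hg, linearIndependent_insert' hxd]
        have hliA1 : LinearIndependent (ZMod 2)
            (fun y : ↥((↑(gB M) : Set (Fin m)) \ {Fin.castLE hkm b'}) => g (y : Fin m)) :=
          (indep_iff_li hE hg).1 (gB_indep.subset diff_subset)
        rw [and_iff_right hliA1]
      rw [lhs_iff, rhs_iff]
      apply not_congr
      constructor
      · exact fun h => span_mono (image_mono (diff_subset_diff_left hsubB)) h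
      · intro h
        have hmem2 := span_cx hkm hE hg x
        have hA1 := (mem_span_sub_iff hE hg
          (diff_subset (s := (↑(gB M) : Set (Fin m))) (t := {Fin.castLE hkm b'}))
          (Fin.castLE hkm x)).1 h
        have hA2 := (mem_span_sub_iff hE hg hsubB (Fin.castLE hkm x)).1 hmem2
        apply (mem_span_sub_iff hE hg (diff_subset.trans hsubB) (Fin.castLE hkm x)).2
        intro bb hbb
        by_cases hmem : (bb : Fin m) ∈ Fin.castLE hkm '' ↑(gB (prefixMatroid hkm M))
        · have heq : (bb : Fin m) = Fin.castLE hkm b' := by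
            by_contra hne
            exact hbb ⟨hmem, hne⟩
          apply hA1
          rw [heq]
          simp
        · exact hA2 _ hmem

lemma omf_prefix {n : ℕ} (x : Fin k) :
    omf n (prefixMatroid hkm M) x = omf n M (Fin.castLE hkm x) := by
  funext j
  unfold omf
  refine if_congr ?_ rfl rfl
  constructor
  · rintro ⟨b', hb', hidx, hcond⟩
    exact ⟨Fin.castLE hkm b', (mem_gB_prefix_iff hkm).1 hb',
      by rw [← idx_prefix hkm hb', hidx],
      (cond_prefix_iff hkm hE hg hb' x).1 hcond⟩
  · rintro ⟨b, hb, hidx, hcond⟩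
    have hbk : (b : ℕ) < k := by
      by_contra hcon
      exact cond_false_of_ge hkm hE hg hb (le_of_not_gt hcon) x hcond
    have hbmem : b ∈ Fin.castLE hkm '' ↑(gB (prefixMatroid hkm M)) := by
      rw [gB_prefix hkm]
      refine Finset.mem_coe.2 ?_
      rw [greedy_filter (M := M) hkm]
      exact Finset.mem_filter.2 ⟨hb, hbk⟩
    obtain ⟨b', hb', rfl⟩ := hbmem
    have hb'' : b' ∈ gB (prefixMatroid hkm M) := Finset.mem_coe.1 hb'
    refine ⟨b', hb'', ?_, (cond_prefix_iff hkm hE hg hb'' x).2 hcond⟩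
    rw [idx_prefix hkm hb'']
    exact hidx

end prefixrep
end OMM

/-- There is an online matroid morphism from the class of binary matroids with at most `n`
elements into the complete binary matroid of rank `n`: a rank-preserving map
`f_M : Fin m → 𝔽₂ⁿ` for every binary matroid `M` on `Fin m` with `m ≤ n`, consistent on
prefixes.  Here the rank of a set of vectors of `𝔽₂ⁿ` is the dimension of its span. -/
theorem stmt2 (n : ℕ) :
    ∃ f : (m : ℕ) → Matroid (Fin m) → (Fin m → (Fin n → ZMod 2)),
      (∀ m, m ≤ n → ∀ M : Matroid (Fin m), M.E = univ → RepOver (ZMod 2) M →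
        ∀ S : Set (Fin m), (spanRank (ZMod 2) (f m M '' S) : ℕ∞) = mRank M S) ∧
      (∀ k m (hkm : k ≤ m), m ≤ n → ∀ M : Matroid (Fin m), M.E = univ →
        RepOver (ZMod 2) M →
        ∀ i : Fin k, f k (prefixMatroid hkm M) i = f m M (Fin.castLE hkm i)) := by
  refine ⟨fun m M => OMM.omf n M, ?_, ?_⟩
  · intro m hmn M hE hrep S
    obtain ⟨ι, g, hg⟩ := hrep
    exact OMM.rank_pres hE hg hmn S
  · intro k m hkm hmn M hE hrep i
    obtain ⟨ι, g, hg⟩ := hrep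
    exact OMM.omf_prefix hkm hE hg i
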